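/- Suppose R > d/m. If x : [0,∞) → [0,1] is differentiable and satisfies x'(t) = φ_R(x(t)) for all t ≥ 0 with x(0) ∈ (0,1], then x(t) → 1 as t → ∞ (i.e., the basin of attraction of the equilibrium x = 1 contains (0,1]). -/
import Mathlib


/-- If R > d/m, every trajectory of ẋ = φ_R(x) on [0,1] starting in (0,1]
converges to 1. -/
theorem stmt_10 (m n : ℕ) (hm : 0 < m) (hn : 0 < n) (d R : ℝ) (hd : 0 < d) (hR : 0 < R)
    (h : d / (m : ℝ) < R)
    (x : ℝ → ℝ)
    (hmem : ∀ t : ℝ, 0 ≤ t → x t ∈ Set.Icc (0 : ℝ) 1)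
    (hode : ∀ t : ℝ, 0 ≤ t →
      HasDerivAt x
        ((x t * (1 - x t) / ((m : ℝ) + n * x t)) * (R - d / ((m : ℝ) + n * x t))) t)
    (h0 : x 0 ∈ Set.Ioc (0 : ℝ) 1) :
    Filter.Tendsto x Filter.atTop (nhds 1) := by
  have hm' : (0:ℝ) < m := by exact_mod_cast hm
  have hn' : (0:ℝ) < n := by exact_mod_cast hn
  have hden : ∀ y : ℝ, 0 ≤ y → (0:ℝ) < (m:ℝ) + n * y := by
    intro y hy
    have : 0 ≤ (n:ℝ) * y := by positivity
    linarith
  have hfac : ∀ y : ℝ, 0 ≤ y → 0 < R - d / ((m:ℝ) + n * y) := by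
    intro y hy
    have h1 : d / ((m:ℝ) + n * y) ≤ d / m := by
      apply div_le_div_of_nonneg_left hd.le hm'
      have : 0 ≤ (n:ℝ) * y := by positivity
      linarith
    linarith
  have hφ0 : ∀ y : ℝ, y ∈ Set.Icc (0:ℝ) 1 →
      0 ≤ y * (1 - y) / ((m:ℝ) + n * y) * (R - d / ((m:ℝ) + n * y)) := by
    intro y hy
    have h1 : 0 ≤ y * (1 - y) / ((m:ℝ) + n * y) := by
      apply div_nonneg _ (hden y hy.1).le
      have := hy.1; have := hy.2; nlinarith
    exact mul_nonneg h1 (hfac y hy.1).le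
  -- continuity on Ici 0
  have cont : ContinuousOn x (Set.Ici 0) := fun t ht =>
    (hode t ht).continuousAt.continuousWithinAt
  -- x is monotone on Ici 0
  have hmono : MonotoneOn x (Set.Ici 0) := by
    apply monotoneOn_of_deriv_nonneg (convex_Ici 0) cont
    · intro t ht
      rw [interior_Ici] at ht
      exact (hode t ht.le).differentiableAt.differentiableWithinAt
    · intro t ht
      rw [interior_Ici] at ht
      rw [(hode t ht.le).deriv]
      exact hφ0 _ (hmem t ht.le)
  -- the shifted function X
  set X : ℝ → ℝ := fun t => x (max t 0) with hX
  have hXmono : Monotone X := by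
    intro s t hst
    exact hmono (le_max_right s 0) (le_max_right t 0) (max_le_max hst le_rfl)
  have hXbdd : BddAbove (Set.range X) := by
    refine ⟨1, ?_⟩
    rintro _ ⟨t, rfl⟩
    exact (hmem _ (le_max_right t 0)).2
  set L : ℝ := ⨆ t, X t with hLdef
  have hXL : Filter.Tendsto X Filter.atTop (nhds L) := tendsto_atTop_ciSup hXmono hXbdd
  have hxX : Filter.Tendsto x Filter.atTop (nhds L) := by
    refine hXL.congr' ?_
    filter_upwards [Filter.eventually_ge_atTop (0:ℝ)] with t ht
    simp [hX, max_eq_left ht]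
  have hL1 : L ≤ 1 := ciSup_le fun t => (hmem _ (le_max_right t 0)).2
  have hL0 : x 0 ≤ L := by
    have := le_ciSup hXbdd (0:ℝ)
    simpa [hX] using this
  have hxle : ∀ t : ℝ, 0 ≤ t → x t ≤ L := by
    intro t ht
    have := le_ciSup hXbdd t
    simpa [hX, max_eq_left ht] using this
  have hxge : ∀ t : ℝ, 0 ≤ t → x 0 ≤ x t := fun t ht =>
    hmono (le_refl (0:ℝ)) ht ht
  -- claim L = 1
  rcases lt_or_eq_of_le hL1 with hL | hL
  · exfalso
    set c : ℝ := x 0 * (1 - L) / ((m:ℝ) + n) * (R - d / m) with hc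
    have hx0 : 0 < x 0 := h0.1
    have hcpos : 0 < c := by
      apply mul_pos
      · apply div_pos (by nlinarith) (by positivity)
      · linarith
    -- lower bound on the vector field along the trajectory
    have hkey : ∀ t : ℝ, 0 ≤ t →
        c ≤ x t * (1 - x t) / ((m:ℝ) + n * x t) * (R - d / ((m:ℝ) + n * x t)) := by
      intro t ht
      have hy0 : x 0 ≤ x t := hxge t ht
      have hyL : x t ≤ L := hxle t ht
      have hy : 0 ≤ x t := (hmem t ht).1
      have hA : x 0 * (1 - L) / ((m:ℝ) + n) ≤ x t * (1 - x t) / ((m:ℝ) + n * x t) := by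
        apply div_le_div₀ (by nlinarith) (by nlinarith) (hden _ hy)
        have : (n:ℝ) * x t ≤ n * 1 := by
          have : x t ≤ 1 := (hmem t ht).2
          nlinarith
        linarith
      have hB : R - d / (m:ℝ) ≤ R - d / ((m:ℝ) + n * x t) := by
        have h1 : d / ((m:ℝ) + n * x t) ≤ d / m := by
          apply div_le_div_of_nonneg_left hd.le hm'
          have : 0 ≤ (n:ℝ) * x t := by positivity
          linarith
        linarith
      calc c ≤ x t * (1 - x t) / ((m:ℝ) + n * x t) * (R - d / m) := by
              apply mul_le_mul_of_nonneg_right hA (by linarith)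
        _ ≤ x t * (1 - x t) / ((m:ℝ) + n * x t) * (R - d / ((m:ℝ) + n * x t)) := by
              apply mul_le_mul_of_nonneg_left hB
              apply div_nonneg _ (hden _ hy).le
              have := (hmem t ht).2; nlinarith
    -- g t = x t - c * t is monotone on Ici 0
    have hg : MonotoneOn (fun t => x t - c * t) (Set.Ici 0) := by
      apply monotoneOn_of_deriv_nonneg (convex_Ici 0)
      · exact cont.sub ((continuous_const.mul continuous_id).continuousOn)
      · intro t ht
        rw [interior_Ici] at ht
        exact (((hode t ht.le).sub (by simpa using (hasDerivAt_id t).const_mul c)).differentiableAt).differentiableWithinAt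
      · intro t ht
        rw [interior_Ici] at ht
        have hD : HasDerivAt (fun t => x t - c * t)
            ((x t * (1 - x t) / ((m:ℝ) + n * x t) * (R - d / ((m:ℝ) + n * x t))) - c) t := by
          exact (hode t ht.le).sub (by simpa using (hasDerivAt_id t).const_mul c)
        rw [hD.deriv]
        have := hkey t ht.le
        linarith
    -- contradiction at time 2/c
    have hT : (0:ℝ) ≤ 2 / c := by positivity
    have := hg (Set.self_mem_Ici) (Set.mem_Ici.2 hT) hT
    simp only [mul_zero, sub_zero] at this
    have hxT : x 0 + c * (2 / c) ≤ x (2 / c) := by linarith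
    rw [mul_div_cancel₀ _ (ne_of_gt hcpos)] at hxT
    have := (hmem _ hT).2
    linarith
  · rw [hL] at hxX
    exact hxX
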